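/- Let p > 0 and λ_min > 0 be real. Define f(α) = (α² + p)/(α(α + λ_min)) for α > 0. Then f attains its minimum on (0,∞) at α* = (p + √(p² + λ_min²·p))/λ_min, i.e., f(α) ≥ f(α*) for all α > 0. -/

import Mathlib

theorem stmt_9 (p lmin : ℝ) (hp : 0 < p) (hl : 0 < lmin)
    (f : ℝ → ℝ) (hf : ∀ α, f α = (α ^ 2 + p) / (α * (α + lmin)))
    (αstar : ℝ) (hαstar : αstar = (p + Real.sqrt (p ^ 2 + lmin ^ 2 * p)) / lmin) :
    ∀ α : ℝ, 0 < α → f αstar ≤ f α := by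
  set s := Real.sqrt (p ^ 2 + lmin ^ 2 * p) with hsdef
  have hs2 : s ^ 2 = p ^ 2 + lmin ^ 2 * p := Real.sq_sqrt (by positivity)
  have hs : 0 < s := Real.sqrt_pos.2 (by positivity)
  have hast : 0 < αstar := by rw [hαstar]; positivity
  have hls : lmin * αstar - p = s := by rw [hαstar]; field_simp; ring
  have key : lmin * αstar ^ 2 = 2 * p * αstar + lmin * p := by
    rw [hαstar]; field_simp; nlinarith [hs2]
  intro α hα
  rw [hf, hf, div_le_div_iff₀ (by positivity) (by positivity)]
  nlinarith [mul_nonneg (sq_nonneg (α - αstar)) (by nlinarith : (0:ℝ) ≤ lmin * αstar - p),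
    key, mul_pos hα hast]
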